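/- If in addition there exists c ∈ (a,b) such that ϕ'(θ) ≤ 0 for all θ ∈ (a,c] and ϕ'(θ) ≥ 0 for all θ ∈ [c,b), then |v(θ,θ̃)| ≤ √(2/ϕ(c)) for all θ, θ̃ ∈ (a,b). -/

import Mathlib

/-- Energy monotonicity: for a solution of w'' + ϕ w = 0, the energy
    w² + w'²/ϕ attains its max over (a,b) at c. -/
lemma energy_le_at_c (a b : ℝ) (ϕ ϕd : ℝ → ℝ)
    (hϕd : ∀ θ ∈ Set.Ioo a b, HasDerivAt ϕ (ϕd θ) θ)
    (hϕpos : ∀ θ ∈ Set.Ioo a b, 0 < ϕ θ)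
    (w wd wdd : ℝ → ℝ)
    (hwd : ∀ θ ∈ Set.Ioo a b, HasDerivAt w (wd θ) θ)
    (hwdd : ∀ θ ∈ Set.Ioo a b, HasDerivAt wd (wdd θ) θ)
    (hode : ∀ θ ∈ Set.Ioo a b, wdd θ + ϕ θ * w θ = 0)
    (c : ℝ) (hc : c ∈ Set.Ioo a b)
    (hdec : ∀ θ ∈ Set.Ioc a c, ϕd θ ≤ 0)
    (hinc : ∀ θ ∈ Set.Ico c b, 0 ≤ ϕd θ)
    (θ : ℝ) (hθ : θ ∈ Set.Ioo a b) :
    w θ ^ 2 + wd θ ^ 2 / ϕ θ ≤ w c ^ 2 + wd c ^ 2 / ϕ c := by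
  set E : ℝ → ℝ := fun x => w x ^ 2 + wd x ^ 2 / ϕ x with hEdef
  have hE : ∀ x ∈ Set.Ioo a b,
      HasDerivAt E (-(wd x ^ 2) * ϕd x / ϕ x ^ 2) x := by
    intro x hx
    have h1 := (hwd x hx).pow 2
    have h2 := ((hwdd x hx).pow 2).div (hϕd x hx) (ne_of_gt (hϕpos x hx))
    have h3 := h1.add h2
    refine h3.congr_deriv ?_
    have hode' : wdd x = -(ϕ x * w x) := by linarith [hode x hx]
    have hϕne : ϕ x ≠ 0 := ne_of_gt (hϕpos x hx)
    field_simp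
    rw [hode']; simp only [Pi.pow_apply]; ring
  rcases le_total θ c with hθc | hθc
  · -- E monotone on [θ, c]
    have hsub : Set.Icc θ c ⊆ Set.Ioo a b := Set.Icc_subset_Ioo hθ.1 hc.2
    have hmono : MonotoneOn E (Set.Icc θ c) := by
      apply monotoneOn_of_deriv_nonneg (convex_Icc θ c)
      · intro x hx
        exact ((hE x (hsub hx)).continuousAt).continuousWithinAt
      · intro x hx
        rw [interior_Icc] at hx
        exact ((hE x (hsub (Set.Ioo_subset_Icc_self hx))).differentiableAt).differentiableWithinAt
      · intro x hx
        rw [interior_Icc] at hx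
        have hxab : x ∈ Set.Ioo a b := hsub (Set.Ioo_subset_Icc_self hx)
        rw [(hE x hxab).deriv]
        have hd : ϕd x ≤ 0 := hdec x ⟨lt_trans hθ.1 hx.1, le_of_lt hx.2⟩
        have : 0 ≤ wd x ^ 2 * (-ϕd x) := mul_nonneg (sq_nonneg _) (by linarith)
        have h2 : 0 ≤ -(wd x ^ 2) * ϕd x := by nlinarith
        exact div_nonneg h2 (sq_nonneg _)
    exact hmono ⟨le_refl θ, hθc⟩ ⟨hθc, le_refl c⟩ hθc
  · -- E antitone on [c, θ]
    have hsub : Set.Icc c θ ⊆ Set.Ioo a b := Set.Icc_subset_Ioo hc.1 hθ.2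
    have hanti : AntitoneOn E (Set.Icc c θ) := by
      apply antitoneOn_of_deriv_nonpos (convex_Icc c θ)
      · intro x hx
        exact ((hE x (hsub hx)).continuousAt).continuousWithinAt
      · intro x hx
        rw [interior_Icc] at hx
        exact ((hE x (hsub (Set.Ioo_subset_Icc_self hx))).differentiableAt).differentiableWithinAt
      · intro x hx
        rw [interior_Icc] at hx
        have hxab : x ∈ Set.Ioo a b := hsub (Set.Ioo_subset_Icc_self hx)
        rw [(hE x hxab).deriv]
        have hd : 0 ≤ ϕd x := hinc x ⟨le_of_lt hx.1, lt_trans hx.2 hθ.2⟩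
        have h2 : -(wd x ^ 2) * ϕd x ≤ 0 := by nlinarith [sq_nonneg (wd x)]
        exact div_nonpos_of_nonpos_of_nonneg h2 (sq_nonneg _)
    exact hanti ⟨le_refl c, hθc⟩ ⟨hθc, le_refl θ⟩ hθc

/-- Theorem 3.1 (first part): under the one-sided monotonicity of ϕ around a point c,
    |v(θ,θ̃)| ≤ √(2/ϕ(c)) for all θ, θ̃ ∈ (a,b). -/
theorem stmt_0 (a b : ℝ) (hab : a < b)
    (ϕ ϕd uI uId uIdd uII uIId uIIdd : ℝ → ℝ)
    (hϕd : ∀ θ ∈ Set.Ioo a b, HasDerivAt ϕ (ϕd θ) θ)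
    (hϕdc : ContinuousOn ϕd (Set.Ioo a b))
    (hϕpos : ∀ θ ∈ Set.Ioo a b, 0 < ϕ θ)
    (huId : ∀ θ ∈ Set.Ioo a b, HasDerivAt uI (uId θ) θ)
    (huIdd : ∀ θ ∈ Set.Ioo a b, HasDerivAt uId (uIdd θ) θ)
    (huIId : ∀ θ ∈ Set.Ioo a b, HasDerivAt uII (uIId θ) θ)
    (huIIdd : ∀ θ ∈ Set.Ioo a b, HasDerivAt uIId (uIIdd θ) θ)
    (hodeI : ∀ θ ∈ Set.Ioo a b, uIdd θ + ϕ θ * uI θ = 0)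
    (hodeII : ∀ θ ∈ Set.Ioo a b, uIIdd θ + ϕ θ * uII θ = 0)
    (hW : ∀ θ ∈ Set.Ioo a b, uI θ * uIId θ - uId θ * uII θ = 1)
    (c : ℝ) (hc : c ∈ Set.Ioo a b)
    (hdec : ∀ θ ∈ Set.Ioc a c, ϕd θ ≤ 0)
    (hinc : ∀ θ ∈ Set.Ico c b, 0 ≤ ϕd θ) :
    ∀ θ ∈ Set.Ioo a b, ∀ θt ∈ Set.Ioo a b,
      |uI θ * uII θt - uI θt * uII θ| ≤ Real.sqrt (2 / ϕ c) := by
  intro θ hθ θt hθt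
  have hϕc := hϕpos c hc
  have hϕθ := hϕpos θ hθ
  have hϕθt := hϕpos θt hθt
  -- First application: w x = v(x, θt)
  have key1 : (uI θ * uII θt - uI θt * uII θ) ^ 2
      + (uId θ * uII θt - uI θt * uIId θ) ^ 2 / ϕ θ
      ≤ (uI c * uII θt - uI θt * uII c) ^ 2
      + (uId c * uII θt - uI θt * uIId c) ^ 2 / ϕ c := by
    apply energy_le_at_c a b ϕ ϕd hϕd hϕpos
      (fun x => uI x * uII θt - uI θt * uII x)
      (fun x => uId x * uII θt - uI θt * uIId x)
      (fun x => uIdd x * uII θt - uI θt * uIIdd x)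
      (fun x hx => ((huId x hx).mul_const _).sub ((huIId x hx).const_mul _))
      (fun x hx => ((huIdd x hx).mul_const _).sub ((huIIdd x hx).const_mul _))
      (fun x hx => by
        have h1 := hodeI x hx; have h2 := hodeII x hx
        linear_combination uII θt * h1 - uI θt * h2)
      c hc hdec hinc θ hθ
  -- Second application: f x = v(c, x)
  have key2 : (uI c * uII θt - uI θt * uII c) ^ 2
      + (uI c * uIId θt - uId θt * uII c) ^ 2 / ϕ θt
      ≤ (uI c * uII c - uI c * uII c) ^ 2
      + (uI c * uIId c - uId c * uII c) ^ 2 / ϕ c := by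
    apply energy_le_at_c a b ϕ ϕd hϕd hϕpos
      (fun x => uI c * uII x - uI x * uII c)
      (fun x => uI c * uIId x - uId x * uII c)
      (fun x => uI c * uIIdd x - uIdd x * uII c)
      (fun x hx => ((huIId x hx).const_mul _).sub ((huId x hx).mul_const _))
      (fun x hx => ((huIIdd x hx).const_mul _).sub ((huIdd x hx).mul_const _))
      (fun x hx => by
        have h1 := hodeI x hx; have h2 := hodeII x hx
        linear_combination uI c * h2 - uII c * h1)
      c hc hdec hinc θt hθt
  -- Third application: g x = v_θ(c, x)
  have key3 : (uId c * uII θt - uI θt * uIId c) ^ 2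
      + (uId c * uIId θt - uId θt * uIId c) ^ 2 / ϕ θt
      ≤ (uId c * uII c - uI c * uIId c) ^ 2
      + (uId c * uIId c - uId c * uIId c) ^ 2 / ϕ c := by
    apply energy_le_at_c a b ϕ ϕd hϕd hϕpos
      (fun x => uId c * uII x - uI x * uIId c)
      (fun x => uId c * uIId x - uId x * uIId c)
      (fun x => uId c * uIIdd x - uIdd x * uIId c)
      (fun x hx => ((huIId x hx).const_mul _).sub ((huId x hx).mul_const _))
      (fun x hx => ((huIIdd x hx).const_mul _).sub ((huIdd x hx).mul_const _))
      (fun x hx => by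
        have h1 := hodeI x hx; have h2 := hodeII x hx
        linear_combination uId c * h2 - uIId c * h1)
      c hc hdec hinc θt hθt
  have hWc := hW c hc
  -- bound f(θt)² ≤ 1/ϕ c
  have hf : (uI c * uII θt - uI θt * uII c) ^ 2 ≤ 1 / ϕ c := by
    have hnn : 0 ≤ (uI c * uIId θt - uId θt * uII c) ^ 2 / ϕ θt :=
      div_nonneg (sq_nonneg _) (le_of_lt hϕθt)
    have h1 : (uI c * uIId c - uId c * uII c) ^ 2 = 1 := by
      rw [hWc]; norm_num
    rw [sub_self, h1] at key2
    norm_num at key2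
    rw [one_div]
    linarith
  -- bound g(θt)² ≤ 1
  have hg : (uId c * uII θt - uI θt * uIId c) ^ 2 ≤ 1 := by
    have hnn : 0 ≤ (uId c * uIId θt - uId θt * uIId c) ^ 2 / ϕ θt :=
      div_nonneg (sq_nonneg _) (le_of_lt hϕθt)
    have h1 : (uId c * uII c - uI c * uIId c) ^ 2 = 1 := by nlinarith [hWc]
    rw [sub_self, h1] at key3
    norm_num at key3
    linarith
  -- combine
  have hsq : (uI θ * uII θt - uI θt * uII θ) ^ 2 ≤ 2 / ϕ c := by
    have hnn : 0 ≤ (uId θ * uII θt - uI θt * uIId θ) ^ 2 / ϕ θ :=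
      div_nonneg (sq_nonneg _) (le_of_lt hϕθ)
    have hg' : (uId c * uII θt - uI θt * uIId c) ^ 2 / ϕ c ≤ 1 / ϕ c :=
      (div_le_div_iff_of_pos_right hϕc).mpr hg
    have h2 : (2 : ℝ) / ϕ c = 1 / ϕ c + 1 / ϕ c := by ring
    rw [h2]
    nlinarith [key1]
  calc |uI θ * uII θt - uI θt * uII θ|
      = Real.sqrt ((uI θ * uII θt - uI θt * uII θ) ^ 2) := (Real.sqrt_sq_eq_abs _).symm
    _ ≤ Real.sqrt (2 / ϕ c) := Real.sqrt_le_sqrt hsq
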